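/- If f : 𝔻 → ℂ is holomorphic, univalent, and maps the unit disk onto a convex domain, then sup_{z∈𝔻} (1-|z|²)² |S_f(z)| ≤ 2, where S_f = (f''/f')' - (1/2)(f''/f')². -/

import Mathlib

open Metric

/-- The classical Schwarzian derivative `S_f = (f''/f')' - (1/2)(f''/f')²`. -/
noncomputable def schwarzian (f : ℂ → ℂ) (z : ℂ) : ℂ :=
  deriv (fun w => deriv (deriv f) w / deriv f w) z
    - (deriv (deriv f) z / deriv f z) ^ 2 / 2

open Filter Set Complex
open scoped Topology

lemma deriv_ne_zero_of_injOn {f : ℂ → ℂ} {s : Set ℂ} (hs : IsOpen s)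
    (hd : DifferentiableOn ℂ f s) (hinj : Set.InjOn f s) {z₀ : ℂ} (hz₀ : z₀ ∈ s) :
    deriv f z₀ ≠ 0 := by
  intro hder
  have hA : AnalyticAt ℂ f z₀ := hd.analyticOnNhd hs z₀ hz₀
  set h : ℂ → ℂ := fun z => f z - f z₀ with hh
  have hA' : AnalyticAt ℂ h z₀ := hA.sub analyticAt_const
  have hs_mem : s ∈ 𝓝 z₀ := hs.mem_nhds hz₀
  -- h is not eventually zero
  have hnev : ¬ ∀ᶠ z in 𝓝 z₀, h z = 0 := by
    intro hev
    have : ∀ᶠ z in 𝓝[≠] z₀, z ∈ s ∧ h z = 0 :=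
      ((hev.and (hs.eventually_mem hz₀)).filter_mono nhdsWithin_le_nhds).mono
        (fun z hz => ⟨hz.2, hz.1⟩)
    obtain ⟨z₁, ⟨hz₁s, hz₁⟩, hz₁ne⟩ := (this.and self_mem_nhdsWithin).exists
    have : f z₁ = f z₀ := by
      have := sub_eq_zero.mp hz₁; simpa using this
    exact hz₁ne (hinj hz₁s hz₀ this)
  have hot : analyticOrderAt h z₀ ≠ ⊤ := fun ht => hnev (analyticOrderAt_eq_top.mp ht)
  obtain ⟨n, hn⟩ : ∃ n : ℕ, analyticOrderAt h z₀ = n := by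
    lift analyticOrderAt h z₀ to ℕ using hot with n hn
    exact ⟨n, rfl⟩
  obtain ⟨g, hg, hg0, hfac⟩ := hA'.analyticOrderAt_eq_natCast.mp hn
  simp only [smul_eq_mul] at hfac
  -- n ≥ 2
  have hn0 : n ≠ 0 := by
    rintro rfl
    have := hfac.self_of_nhds
    simp [hh] at this
    exact hg0 this.symm
  have hderh : deriv h z₀ = 0 := by
    have : deriv h z₀ = deriv f z₀ := by
      simp only [hh]
      exact deriv_sub_const _
    rw [this, hder]
  have hn1 : n ≠ 1 := by
    rintro rfl
    have hder' : deriv h z₀ = g z₀ := by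
      have : deriv (fun z => (z - z₀) ^ 1 * g z) z₀ = g z₀ := by
        have h1 : HasDerivAt (fun z : ℂ => (z - z₀) ^ 1 * g z)
            ((1 : ℂ) * g z₀ + (z₀ - z₀) ^ 1 * deriv g z₀) z₀ := by
          have ha : HasDerivAt (fun z : ℂ => (z - z₀) ^ 1) (1 : ℂ) z₀ := by
            simpa using ((hasDerivAt_id z₀).sub_const z₀)
          exact ha.mul hg.differentiableAt.hasDerivAt
        simpa using h1.deriv
      rw [← this]
      exact Filter.EventuallyEq.deriv_eq hfac
    rw [hderh] at hder'
    exact hg0 hder'.symm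
  have hn2 : 2 ≤ n := by omega
  have hnC : (n : ℂ) ≠ 0 := Nat.cast_ne_zero.mpr hn0
  -- construct n-th root of g near z₀
  set c : ℂ := g z₀ with hc
  set ρ : ℂ → ℂ := fun z => Complex.exp (Complex.log (g z / c) / n) *
      Complex.exp (Complex.log c / n) with hρ
  have hρz₀ : ρ z₀ = Complex.exp (Complex.log c / n) := by
    simp [hρ, ← hc, div_self hg0, Complex.log_one]
  have hρA : AnalyticAt ℂ ρ z₀ := by
    have h1 : AnalyticAt ℂ (fun z => g z / c) z₀ := hg.div analyticAt_const hg0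
    have h2 : AnalyticAt ℂ (fun z => Complex.log (g z / c)) z₀ := by
      refine h1.clog ?_
      simp only [← hc, div_self hg0]
      exact Complex.one_mem_slitPlane
    exact ((h2.div analyticAt_const hnC).cexp).mul analyticAt_const
  have hρ0 : ρ z₀ ≠ 0 := by rw [hρz₀]; exact Complex.exp_ne_zero _
  -- eventually (ρ z)^n = g z
  have hev_g : ∀ᶠ z in 𝓝 z₀, g z ≠ 0 :=
    hg.continuousAt.eventually_ne hg0
  have hev_root : ∀ᶠ z in 𝓝 z₀, (ρ z) ^ n = g z := by
    filter_upwards [hev_g] with z hz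
    have h1 : Complex.exp (Complex.log (g z / c) / n) ^ n = g z / c := by
      rw [← Complex.exp_nat_mul, mul_div_cancel₀ _ hnC, Complex.exp_log (div_ne_zero hz hg0)]
    have h2 : Complex.exp (Complex.log c / n) ^ n = c := by
      rw [← Complex.exp_nat_mul, mul_div_cancel₀ _ hnC, Complex.exp_log hg0]
    rw [hρ]; rw [mul_pow, h1, h2, div_mul_cancel₀ _ hg0]
  set φ : ℂ → ℂ := fun z => (z - z₀) * ρ z with hφ
  have hφz₀ : φ z₀ = 0 := by simp [hφ]
  have hφstrict : HasStrictDerivAt φ (ρ z₀) z₀ := by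
    have h1 : HasStrictDerivAt (fun z : ℂ => z - z₀) 1 z₀ :=
      (hasStrictDerivAt_id z₀).sub_const z₀
    have h2 : HasStrictDerivAt ρ (deriv ρ z₀) z₀ :=
      ((hρA.contDiffAt (n := 1)).hasStrictDerivAt one_ne_zero)
    have := h1.mul h2
    exact this.congr_deriv (by simp)
  set N := hφstrict.localInverse φ (ρ z₀) z₀ hρ0 with hN
  have hright : ∀ᶠ w in 𝓝 (0 : ℂ), φ (N w) = w := by
    have := (hφstrict.hasStrictFDerivAt_equiv hρ0).eventually_right_inverse
    rwa [hφz₀] at this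
  have htend : Filter.Tendsto N (𝓝 (0 : ℂ)) (𝓝 z₀) := by
    have := (hφstrict.hasStrictFDerivAt_equiv hρ0).localInverse_tendsto
    rwa [hφz₀] at this
  -- the good set
  have hVmem : {z | z ∈ s ∧ h z = φ z ^ n} ∈ 𝓝 z₀ := by
    have : ∀ᶠ z in 𝓝 z₀, z ∈ s ∧ h z = φ z ^ n := by
      filter_upwards [hs.eventually_mem hz₀, hfac, hev_root] with z h1 h2 h3
      refine ⟨h1, ?_⟩
      rw [h2, hφ, mul_pow, h3]
    exact this
  have hG : ∀ᶠ w in 𝓝 (0 : ℂ), φ (N w) = w ∧ N w ∈ s ∧ h (N w) = φ (N w) ^ n := by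
    filter_upwards [hright, htend.eventually hVmem] with w h1 h2
    exact ⟨h1, h2.1, h2.2⟩
  set ζ : ℂ := Complex.exp (2 * Real.pi * Complex.I / n) with hζ
  have hζn : ζ ^ n = 1 := by
    rw [hζ, ← Complex.exp_nat_mul, mul_div_cancel₀ _ hnC, Complex.exp_two_pi_mul_I]
  have hζ1 : ζ ≠ 1 := by
    rw [hζ]
    intro hone
    obtain ⟨k, hk⟩ := Complex.exp_eq_one_iff.mp hone
    have h2πI : (2 * Real.pi * Complex.I : ℂ) ≠ 0 := by
      simp [Real.pi_ne_zero, Complex.I_ne_zero]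
    rw [div_eq_iff hnC] at hk
    -- 2πI = k * 2πI * n  →  1 = k n
    have : (1 : ℂ) = (k : ℂ) * n := by
      have := hk
      field_simp at this ⊢
      exact this
    have hint : (1 : ℤ) = k * n := by exact_mod_cast this
    have : (n : ℤ) ∣ 1 := Dvd.intro_left k hint.symm
    have := Int.le_of_dvd one_pos this
    omega
  have hmul_tendsto : Filter.Tendsto (fun w : ℂ => ζ * w) (𝓝 0) (𝓝 0) := by
    simpa using (continuous_mul_left ζ).tendsto 0
  have hG' : ∀ᶠ w in 𝓝 (0 : ℂ),
      (φ (N w) = w ∧ N w ∈ s ∧ h (N w) = φ (N w) ^ n) ∧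
      (φ (N (ζ * w)) = ζ * w ∧ N (ζ * w) ∈ s ∧ h (N (ζ * w)) = φ (N (ζ * w)) ^ n) :=
    hG.and (hmul_tendsto.eventually hG)
  have hne : ∀ᶠ w in 𝓝[≠] (0:ℂ),
      ((φ (N w) = w ∧ N w ∈ s ∧ h (N w) = φ (N w) ^ n) ∧
      (φ (N (ζ * w)) = ζ * w ∧ N (ζ * w) ∈ s ∧ h (N (ζ * w)) = φ (N (ζ * w)) ^ n)) ∧ w ≠ 0 := by
    rw [eventually_nhdsWithin_iff]
    filter_upwards [hG'] with w hw hw0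
    exact ⟨hw, hw0⟩
  obtain ⟨w₀, ⟨⟨ha1, ha2, ha3⟩, hb1, hb2, hb3⟩, hw₀⟩ := hne.exists
  set a := N w₀
  set b := N (ζ * w₀)
  have hfab : f a = f b := by
    have hha : h a = w₀ ^ n := by rw [ha3, ha1]
    have hhb : h b = w₀ ^ n := by rw [hb3, hb1, mul_pow, hζn, one_mul]
    have : h a = h b := by rw [hha, hhb]
    simpa [hh, sub_eq_sub_iff_sub_eq_sub] using this
  have hab : a = b := hinj ha2 hb2 hfab
  have heq : w₀ = ζ * w₀ := by calc w₀ = φ a := ha1.symm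
    _ = φ b := by rw [hab]
    _ = ζ * w₀ := hb1
  have hz : (ζ - 1) * w₀ = 0 := by linear_combination -heq
  rcases mul_eq_zero.mp hz with h | h
  · exact hζ1 (sub_eq_zero.mp h)
  · exact hw₀ h


section GinvSection

noncomputable def ginv (f : ℂ → ℂ) : ℂ → ℂ := Function.invFunOn f (ball (0:ℂ) 1)

variable {f : ℂ → ℂ}

lemma ginv_left (hinj : Set.InjOn f (ball (0:ℂ) 1)) {z : ℂ} (hz : z ∈ ball (0:ℂ) 1) :
    ginv f (f z) = z := hinj.leftInvOn_invFunOn hz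

lemma ginv_right {w : ℂ} (hw : w ∈ f '' ball (0:ℂ) 1) : f (ginv f w) = w := by
  obtain ⟨z, hz, rfl⟩ := hw
  exact Function.invFunOn_eq ⟨z, hz, rfl⟩

lemma ginv_mem {w : ℂ} (hw : w ∈ f '' ball (0:ℂ) 1) : ginv f w ∈ ball (0:ℂ) 1 := by
  obtain ⟨z, hz, rfl⟩ := hw
  exact Function.invFunOn_mem ⟨z, hz, rfl⟩

lemma ginv_key (hd : DifferentiableOn ℂ f (ball (0:ℂ) 1))
    (hinj : Set.InjOn f (ball (0:ℂ) 1)) {z₀ : ℂ} (hz₀ : z₀ ∈ ball (0:ℂ) 1) :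
    HasDerivAt (ginv f) (deriv f z₀)⁻¹ (f z₀) ∧ f '' ball (0:ℂ) 1 ∈ 𝓝 (f z₀) := by
  have hA : AnalyticAt ℂ f z₀ := hd.analyticOnNhd isOpen_ball z₀ hz₀
  have hfd : HasStrictDerivAt f (deriv f z₀) z₀ := (hA.contDiffAt (n := 1)).hasStrictDerivAt one_ne_zero
  have hne : deriv f z₀ ≠ 0 := deriv_ne_zero_of_injOn isOpen_ball hd hinj hz₀
  set l := hfd.localInverse f (deriv f z₀) z₀ hne with hl
  have hev1 : ∀ᶠ w in 𝓝 (f z₀), f (l w) = w :=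
    (hfd.hasStrictFDerivAt_equiv hne).eventually_right_inverse
  have htend : Tendsto l (𝓝 (f z₀)) (𝓝 z₀) :=
    (hfd.hasStrictFDerivAt_equiv hne).localInverse_tendsto
  have hev2 : ∀ᶠ w in 𝓝 (f z₀), l w ∈ ball (0:ℂ) 1 :=
    htend.eventually (isOpen_ball.eventually_mem hz₀)
  have hev3 : ∀ᶠ w in 𝓝 (f z₀), ginv f w = l w := by
    filter_upwards [hev1, hev2] with w h1 h2
    have hw : w ∈ f '' ball (0:ℂ) 1 := ⟨l w, h2, h1⟩
    have := ginv_right hw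
    have heq : f (ginv f w) = f (l w) := by rw [this, h1]
    exact hinj (ginv_mem hw) h2 heq
  constructor
  · have hlD : HasStrictDerivAt l (deriv f z₀)⁻¹ (f z₀) := hfd.to_localInverse hne
    exact hlD.hasDerivAt.congr_of_eventuallyEq hev3
  · filter_upwards [hev1, hev2] with w h1 h2
    exact ⟨l w, h2, h1⟩

lemma image_ball_isOpen (hd : DifferentiableOn ℂ f (ball (0:ℂ) 1))
    (hinj : Set.InjOn f (ball (0:ℂ) 1)) : IsOpen (f '' ball (0:ℂ) 1) := by
  rw [isOpen_iff_mem_nhds]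
  rintro w ⟨z, hz, rfl⟩
  exact (ginv_key hd hinj hz).2

lemma ginv_differentiableOn (hd : DifferentiableOn ℂ f (ball (0:ℂ) 1))
    (hinj : Set.InjOn f (ball (0:ℂ) 1)) :
    DifferentiableOn ℂ (ginv f) (f '' ball (0:ℂ) 1) := by
  rintro w ⟨z, hz, rfl⟩
  exact ((ginv_key hd hinj hz).1.differentiableAt).differentiableWithinAt

/-- chain rule: complex-differentiable function composed with a real-differentiable curve -/
lemma HasDerivAt.comp_real {φ : ℂ → ℂ} {c : ℝ → ℂ} {a c' : ℂ} {α : ℝ}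
    (hφ : HasDerivAt φ a (c α)) (hc : HasDerivAt c c' α) :
    HasDerivAt (fun t => φ (c t)) (c' * a) α := by
  have := (hφ.hasFDerivAt.restrictScalars ℝ).comp_hasDerivAt α hc
  simpa [mul_comm, Function.comp_def] using this

set_option maxHeartbeats 1000000 in
lemma convexity_criterion (hd : DifferentiableOn ℂ f (ball (0:ℂ) 1))
    (hinj : Set.InjOn f (ball (0:ℂ) 1)) (hconv : Convex ℝ (f '' ball (0:ℂ) 1))
    {z₀ : ℂ} (hz₀ : z₀ ∈ ball (0:ℂ) 1) :
    0 ≤ (1 + z₀ * (deriv (deriv f) z₀ / deriv f z₀)).re := by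
  rcases eq_or_ne z₀ 0 with rfl | hz₀ne
  · simp
  by_contra hneg
  push_neg at hneg
  have hB : IsOpen (ball (0:ℂ) 1) := isOpen_ball
  have hAn : AnalyticOnNhd ℂ f (ball (0:ℂ) 1) := hd.analyticOnNhd hB
  have hF₁diff : ∀ z ∈ ball (0:ℂ) 1, HasDerivAt f (deriv f z) z := fun z hz =>
    ((hAn z hz).differentiableAt).hasDerivAt
  have hF₂diff : ∀ z ∈ ball (0:ℂ) 1, HasDerivAt (deriv f) (deriv (deriv f) z) z := fun z hz =>
    ((hAn.deriv z hz).differentiableAt).hasDerivAt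
  have hne : deriv f z₀ ≠ 0 := deriv_ne_zero_of_injOn hB hd hinj hz₀
  -- exp curve facts
  have habs_exp : ∀ α : ℝ, ‖Complex.exp (↑α * I)‖ = 1 := by
    intro α
    rw [Complex.norm_exp]
    simp
  have habs_exp' : ∀ α : ℝ, ‖Complex.exp (-(↑α * I))‖ = 1 := by
    intro α
    rw [Complex.norm_exp]
    simp
  have hmemc : ∀ (α : ℝ) (z : ℂ), z ∈ ball (0:ℂ) 1 → z * Complex.exp (↑α * I) ∈ ball (0:ℂ) 1 := by
    intro α z hz
    rw [mem_ball_zero_iff] at hz ⊢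
    rw [norm_mul, habs_exp, mul_one]
    exact hz
  have hmemd : ∀ (α : ℝ) (z : ℂ), z ∈ ball (0:ℂ) 1 → z * Complex.exp (-(↑α * I)) ∈ ball (0:ℂ) 1 := by
    intro α z hz
    rw [mem_ball_zero_iff] at hz ⊢
    rw [norm_mul, habs_exp', mul_one]
    exact hz
  -- midpoint of two points of the image is in the image
  have hmid : ∀ x ∈ f '' ball (0:ℂ) 1, ∀ y ∈ f '' ball (0:ℂ) 1,
      (x + y) / 2 ∈ f '' ball (0:ℂ) 1 := by
    intro x hx y hy
    have h2 := hconv hx hy (by norm_num : (0:ℝ) ≤ 1/2) (by norm_num : (0:ℝ) ≤ 1/2)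
      (by norm_num : (1:ℝ)/2 + 1/2 = 1)
    have : (1/2 : ℝ) • x + (1/2 : ℝ) • y = (x + y)/2 := by
      rw [Complex.real_smul, Complex.real_smul]
      push_cast
      ring
    rwa [this] at h2
  -- the midpoint curve
  set c : ℝ → ℂ := fun α => z₀ * Complex.exp (↑α * I) with hc_def
  set d : ℝ → ℂ := fun α => z₀ * Complex.exp (-(↑α * I)) with hd_def
  have hcmem : ∀ α, c α ∈ ball (0:ℂ) 1 := fun α => hmemc α z₀ hz₀
  have hdmem : ∀ α, d α ∈ ball (0:ℂ) 1 := fun α => hmemd α z₀ hz₀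
  have hc : ∀ α, HasDerivAt c (I * c α) α := by
    intro α
    have h1 : HasDerivAt (fun t : ℂ => t * I) I ↑α := by
      simpa using (hasDerivAt_id (↑α : ℂ)).mul_const I
    have h2 : HasDerivAt (fun t : ℂ => Complex.exp (t * I)) (Complex.exp (↑α * I) * I) ↑α :=
      (Complex.hasDerivAt_exp ((↑α : ℂ) * I)).comp (↑α : ℂ) h1
    have h3 : HasDerivAt (fun t : ℝ => Complex.exp (↑t * I)) (Complex.exp (↑α * I) * I) α :=
      h2.comp_ofReal
    have h4 := h3.const_mul z₀
    simp only [hc_def]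
    refine h4.congr_deriv ?_
    symm
    ring
  have hdc : ∀ α, HasDerivAt d (-(I * d α)) α := by
    intro α
    have h1 : HasDerivAt (fun t : ℂ => -(t * I)) (-I) ↑α := by
      simpa using ((hasDerivAt_id (↑α : ℂ)).mul_const I).fun_neg
    have h2 : HasDerivAt (fun t : ℂ => Complex.exp (-(t * I))) (Complex.exp (-(↑α * I)) * -I) ↑α :=
      (Complex.hasDerivAt_exp (-((↑α : ℂ) * I))).comp (↑α : ℂ) h1
    have h3 : HasDerivAt (fun t : ℝ => Complex.exp (-(↑t * I))) (Complex.exp (-(↑α * I)) * -I) α :=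
      h2.comp_ofReal
    have h4 := h3.const_mul z₀
    simp only [hd_def]
    refine h4.congr_deriv ?_
    symm
    ring
  set m : ℝ → ℂ := fun α => (f (c α) + f (d α)) / 2 with hm_def
  set m₁ : ℝ → ℂ := fun α => (I * c α * deriv f (c α) - I * d α * deriv f (d α)) / 2 with hm₁_def
  have hm : ∀ α, HasDerivAt m (m₁ α) α := by
    intro α
    have h1 : HasDerivAt (fun t => f (c t)) (I * c α * deriv f (c α)) α :=
      (hF₁diff _ (hcmem α)).comp_real (hc α)
    have h2 : HasDerivAt (fun t => f (d t)) (-(I * d α) * deriv f (d α)) α :=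
      (hF₁diff _ (hdmem α)).comp_real (hdc α)
    have h3 := (h1.add h2).div_const 2
    simp only [hm_def, hm₁_def]
    refine h3.congr_deriv ?_
    symm
    ring
  have hmmem : ∀ α, m α ∈ f '' ball (0:ℂ) 1 := fun α =>
    hmid _ ⟨c α, hcmem α, rfl⟩ _ ⟨d α, hdmem α, rfl⟩
  set u : ℝ → ℂ := fun α => ginv f (m α) with hu_def
  have humem : ∀ α, u α ∈ ball (0:ℂ) 1 := fun α => ginv_mem (hmmem α)
  set v : ℝ → ℂ := fun α => m₁ α * (deriv f (u α))⁻¹ with hv_def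
  have hu : ∀ α, HasDerivAt u (v α) α := by
    intro α
    have hkey := (ginv_key hd hinj (humem α)).1
    rw [ginv_right (hmmem α)] at hkey
    exact hkey.comp_real (hm α)
  -- Schwarz bound
  have habs : ∀ α, ‖u α‖ ≤ ‖z₀‖ := by
    intro α
    set φ : ℂ → ℂ := fun z =>
      ginv f ((f (z * Complex.exp (↑α * I)) + f (z * Complex.exp (-(↑α * I)))) / 2) with hφ_def
    have hinner : DifferentiableOn ℂ
        (fun z => (f (z * Complex.exp (↑α * I)) + f (z * Complex.exp (-(↑α * I)))) / 2)
        (ball (0:ℂ) 1) := by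
      apply DifferentiableOn.div_const
      apply DifferentiableOn.add
      · exact (hd.comp ((differentiable_id.mul_const _).differentiableOn)
          (fun z hz => hmemc α z hz))
      · exact (hd.comp ((differentiable_id.mul_const _).differentiableOn)
          (fun z hz => hmemd α z hz))
    have hinner_maps : ∀ z ∈ ball (0:ℂ) 1,
        (f (z * Complex.exp (↑α * I)) + f (z * Complex.exp (-(↑α * I)))) / 2
          ∈ f '' ball (0:ℂ) 1 := fun z hz =>
      hmid _ ⟨_, hmemc α z hz, rfl⟩ _ ⟨_, hmemd α z hz, rfl⟩
    have hφd : DifferentiableOn ℂ φ (ball (0:ℂ) 1) :=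
      (ginv_differentiableOn hd hinj).comp hinner hinner_maps
    have hφmaps : MapsTo φ (ball (0:ℂ) 1) (ball (0:ℂ) 1) := fun z hz =>
      ginv_mem (hinner_maps z hz)
    have hφ0 : φ 0 = 0 := by
      have h0mem : (0:ℂ) ∈ ball (0:ℂ) 1 := mem_ball_self one_pos
      simp only [hφ_def, zero_mul, add_self_div_two]
      exact ginv_left hinj h0mem
    have := Complex.norm_le_norm_of_mapsTo_ball hφd (hφmaps.mono_right ball_subset_closedBall) hφ0
      (mem_ball_zero_iff.mp hz₀)
    exact this
  -- values at 0
  have hexp0 : Complex.exp ((0:ℝ) * I) = 1 := by norm_num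
  have hc0 : c 0 = z₀ := by simp [hc_def]
  have hd0 : d 0 = z₀ := by simp [hd_def]
  have hm0 : m 0 = f z₀ := by rw [hm_def]; simp only [hc0, hd0]; exact add_self_div_two _
  have hu0 : u 0 = z₀ := by rw [hu_def]; simp only [hm0]; exact ginv_left hinj hz₀
  have hm₁0 : m₁ 0 = 0 := by rw [hm₁_def]; simp only [hc0, hd0]; ring
  have hv0 : v 0 = 0 := by simp only [hv_def]; rw [hm₁0, zero_mul]
  -- second derivative of the midpoint curve
  set F₁ : ℂ := deriv f z₀ with hF₁_def
  set F₂ : ℂ := deriv (deriv f) z₀ with hF₂_def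
  set m₂ : ℂ := -(z₀ ^ 2 * F₂ + z₀ * F₁) with hm₂_def
  have hm₁' : HasDerivAt m₁ m₂ 0 := by
    have hT1 : HasDerivAt (fun α => I * c α * deriv f (c α))
        ((I * (I * z₀)) * F₁ + (I * z₀) * ((I * z₀) * F₂)) 0 := by
      have ha : HasDerivAt (fun α => I * c α) (I * (I * c 0)) 0 := ((hc 0).const_mul I)
      have hb : HasDerivAt (fun α => deriv f (c α)) ((I * c 0) * deriv (deriv f) (c 0)) 0 :=
        (hF₂diff _ (hcmem 0)).comp_real (hc 0)
      have := ha.mul hb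
      refine this.congr_deriv ?_
      symm
      rw [hc0]
      try ring
    have hT2 : HasDerivAt (fun α => I * d α * deriv f (d α))
        ((I * -(I * z₀)) * F₁ + (I * z₀) * (-(I * z₀) * F₂)) 0 := by
      have ha : HasDerivAt (fun α => I * d α) (I * -(I * d 0)) 0 := ((hdc 0).const_mul I)
      have hb : HasDerivAt (fun α => deriv f (d α)) (-(I * d 0) * deriv (deriv f) (d 0)) 0 :=
        (hF₂diff _ (hdmem 0)).comp_real (hdc 0)
      have := ha.mul hb
      refine this.congr_deriv ?_
      symm
      rw [hd0]
      try ring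
    have h5 := (hT1.sub hT2).div_const 2
    simp only [hm₁_def]
    refine h5.congr_deriv ?_
    symm
    rw [hm₂_def]
    have hI2 : I * I = -1 := Complex.I_mul_I
    linear_combination (-(z₀ * F₁ + z₀^2 * F₂)) * hI2
  -- derivative of v at 0
  set W : ℂ := m₂ * F₁⁻¹ with hW_def
  have hv' : HasDerivAt v W 0 := by
    have hcomp : HasDerivAt (fun α => deriv f (u α)) (v 0 * deriv (deriv f) (u 0)) 0 :=
      (hF₂diff _ (humem 0)).comp_real (hu 0)
    have hF₁u0 : deriv f (u 0) ≠ 0 := by rw [hu0]; exact hne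
    have hNinv := (hasDerivAt_inv hF₁u0).comp_real hcomp
    have h6 := hm₁'.mul hNinv
    simp only [hv_def]
    refine h6.congr_deriv ?_
    symm
    rw [hv0, hu0, hm₁0, hW_def, hF₁_def]
    simp
    try ring
  -- real derivative bookkeeping
  set q : ℝ → ℝ := fun α => (u α).re ^ 2 + (u α).im ^ 2 with hq_def
  set Q : ℝ → ℝ := fun α => 2 * ((u α).re * (v α).re + (u α).im * (v α).im) with hQ_def
  have hre : ∀ α, HasDerivAt (fun t => (u t).re) ((v α).re) α := by
    intro α
    have := (Complex.reCLM.hasFDerivAt (x := u α)).comp_hasDerivAt α (hu α)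
    exact this
  have him : ∀ α, HasDerivAt (fun t => (u t).im) ((v α).im) α := by
    intro α
    have := (Complex.imCLM.hasFDerivAt (x := u α)).comp_hasDerivAt α (hu α)
    exact this
  have hq' : ∀ α, HasDerivAt q (Q α) α := by
    intro α
    have h1 := ((hre α).pow 2).add ((him α).pow 2)
    simp only [hq_def, hQ_def]
    refine h1.congr_deriv ?_
    symm
    push_cast
    ring
  have hQ' : HasDerivAt Q (2 * (z₀.re * W.re + z₀.im * W.im)) 0 := by
    have h1 : HasDerivAt (fun t => (v t).re) (W.re) 0 := by
      have := (Complex.reCLM.hasFDerivAt (x := v 0)).comp_hasDerivAt 0 hv'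
      exact this
    have h2 : HasDerivAt (fun t => (v t).im) (W.im) 0 := by
      have := (Complex.imCLM.hasFDerivAt (x := v 0)).comp_hasDerivAt 0 hv'
      exact this
    have h3 := (((hre 0).mul h1).add ((him 0).mul h2)).const_mul 2
    simp only [hQ_def]
    refine h3.congr_deriv ?_
    symm
    rw [hv0, hu0]
    simp
  -- q is maximal at 0
  have hqmax : ∀ α, q α ≤ q 0 := by
    intro α
    have h1 := habs α
    have h2 : q α = ‖u α‖ ^ 2 := by
      simp only [hq_def]
      rw [Complex.sq_norm, Complex.normSq_apply]; try ring
    have h3 : q 0 = ‖z₀‖ ^ 2 := by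
      simp only [hq_def]
      rw [hu0, Complex.sq_norm, Complex.normSq_apply]; try ring
    rw [h2, h3]
    exact pow_le_pow_left₀ (norm_nonneg _) h1 2
  -- the second derivative is positive: contradiction
  have hQ'₀pos : 0 < 2 * (z₀.re * W.re + z₀.im * W.im) := by
    have hre_eq : z₀.re * W.re + z₀.im * W.im = ((starRingEnd ℂ) z₀ * W).re := by
      simp only [Complex.mul_re, Complex.conj_re, Complex.conj_im]; ring
    have hcw : (starRingEnd ℂ) z₀ * W =
        -↑(Complex.normSq z₀) * (1 + z₀ * (F₂ / F₁)) := by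
      rw [hW_def, hm₂_def, div_eq_mul_inv]
      have hmc : z₀ * (starRingEnd ℂ) z₀ = ↑(Complex.normSq z₀) := Complex.mul_conj z₀
      have h1 : F₁ * F₁⁻¹ = 1 := mul_inv_cancel₀ hne
      linear_combination (-(z₀*F₂*F₁⁻¹) - 1) * hmc + (-((starRingEnd ℂ) z₀ * z₀)) * h1
    have hnspos : 0 < Complex.normSq z₀ := Complex.normSq_pos.mpr hz₀ne
    have : ((starRingEnd ℂ) z₀ * W).re = -Complex.normSq z₀ * (1 + z₀ * (F₂ / F₁)).re := by
      rw [hcw]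
      have : (-↑(Complex.normSq z₀) : ℂ) = ((-Complex.normSq z₀ : ℝ) : ℂ) := by push_cast; ring
      rw [this, Complex.re_ofReal_mul]
    rw [hre_eq, this]
    have hr : (1 + z₀ * (F₂ / F₁)).re < 0 := hneg
    nlinarith
  -- Q is positive on a right neighborhood of 0
  have hQ0 : Q 0 = 0 := by simp only [hQ_def]; rw [hv0]; simp
  have hslope : Filter.Tendsto (slope Q 0) (𝓝[≠] 0) (𝓝 (2 * (z₀.re * W.re + z₀.im * W.im))) :=
    hasDerivAt_iff_tendsto_slope.mp hQ'
  have hslope' : Filter.Tendsto (slope Q 0) (𝓝[>] 0) (𝓝 (2 * (z₀.re * W.re + z₀.im * W.im))) :=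
    hslope.mono_left (nhdsWithin_mono 0 (fun x hx => ne_of_gt hx))
  have hev : ∀ᶠ α in 𝓝[>] (0:ℝ), 0 < Q α := by
    have h1 : ∀ᶠ α in 𝓝[>] (0:ℝ), 0 < slope Q 0 α :=
      hslope'.eventually (lt_mem_nhds hQ'₀pos)
    filter_upwards [h1, self_mem_nhdsWithin] with α h2 h3
    rw [Set.mem_Ioi] at h3
    rw [slope_def_field, hQ0, sub_zero, sub_zero] at h2
    have h4 := mul_pos h2 h3
    rwa [div_mul_cancel₀ _ (ne_of_gt h3)] at h4
  obtain ⟨t, ht, hIoo⟩ := mem_nhdsGT_iff_exists_Ioo_subset.mp hev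
  rw [Set.mem_Ioi] at ht
  set t₀ : ℝ := t / 2 with ht₀_def
  have ht₀pos : 0 < t₀ := by positivity
  have hmono : StrictMonoOn q (Set.Icc 0 t₀) := by
    apply strictMonoOn_of_deriv_pos (convex_Icc 0 t₀)
    · intro α _
      exact (hq' α).differentiableAt.continuousAt.continuousWithinAt
    · intro α hα
      rw [interior_Icc] at hα
      rw [(hq' α).deriv]
      apply hIoo
      exact ⟨hα.1, by linarith [hα.2]⟩
  have hlt : q 0 < q t₀ :=
    hmono (Set.left_mem_Icc.mpr ht₀pos.le) (Set.right_mem_Icc.mpr ht₀pos.le) ht₀pos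
  exact absurd (hqmax t₀) (not_le.mpr hlt)


end GinvSection

-- Möbius factor facts
lemma mobius_denom_ne {c w : ℂ} (hc : ‖c‖ < 1) (hw : ‖w‖ < 1) :
    1 - (starRingEnd ℂ) c * w ≠ 0 := by
  intro h
  have h1 : (starRingEnd ℂ) c * w = 1 := by linear_combination -h
  have : ‖(starRingEnd ℂ) c * w‖ = 1 := by rw [h1, norm_one]
  rw [norm_mul, Complex.norm_conj] at this
  nlinarith [norm_nonneg c, norm_nonneg w]

lemma mobius_normSq_key (c w : ℂ) :
    Complex.normSq (1 - (starRingEnd ℂ) c * w) - Complex.normSq (c - w)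
      = (1 - Complex.normSq c) * (1 - Complex.normSq w) := by
  simp only [Complex.normSq_apply, Complex.sub_re, Complex.sub_im, Complex.mul_re,
    Complex.mul_im, Complex.conj_re, Complex.conj_im, Complex.one_re, Complex.one_im]
  ring

lemma mobius_maps {c w : ℂ} (hc : ‖c‖ < 1) (hw : ‖w‖ < 1) :
    ‖(c - w) / (1 - (starRingEnd ℂ) c * w)‖ < 1 := by
  have hden := mobius_denom_ne hc hw
  rw [norm_div, div_lt_one (norm_pos_iff.mpr hden)]
  have key := mobius_normSq_key c w
  have h1 : 0 < (1 - Complex.normSq c) := by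
    rw [← Complex.sq_norm]; nlinarith [norm_nonneg c]
  have h2 : 0 < (1 - Complex.normSq w) := by
    rw [← Complex.sq_norm]; nlinarith [norm_nonneg w]
  have h3 : Complex.normSq (c - w) < Complex.normSq (1 - (starRingEnd ℂ) c * w) := by nlinarith
  have := Real.sqrt_lt_sqrt (Complex.normSq_nonneg _) h3
  rwa [← Complex.norm_def, ← Complex.norm_def] at this

lemma mobius_hasDerivAt {c w : ℂ} (hden : 1 - (starRingEnd ℂ) c * w ≠ 0) :
    HasDerivAt (fun x => (c - x) / (1 - (starRingEnd ℂ) c * x))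
      ((Complex.normSq c - 1) / (1 - (starRingEnd ℂ) c * w) ^ 2) w := by
  have hu : HasDerivAt (fun x : ℂ => c - x) (-1) w := (hasDerivAt_id w).const_sub c
  have hv : HasDerivAt (fun x : ℂ => 1 - (starRingEnd ℂ) c * x) (-((starRingEnd ℂ) c)) w := by
    simpa using (((hasDerivAt_id w).const_mul ((starRingEnd ℂ) c)).const_sub 1)
  have := hu.div hv hden
  refine this.congr_deriv ?_
  symm
  have hmc : c * (starRingEnd ℂ) c = ↑(Complex.normSq c) := Complex.mul_conj c
  rw [div_left_inj' (pow_ne_zero 2 hden)]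
  linear_combination -hmc

/-- Schwarz–Pick lemma for self-maps of the unit disk -/
lemma schwarz_pick {F : ℂ → ℂ} (hF : DifferentiableOn ℂ F (ball (0:ℂ) 1))
    (hmaps : Set.MapsTo F (ball (0:ℂ) 1) (ball (0:ℂ) 1))
    {a : ℂ} (ha : a ∈ ball (0:ℂ) 1) :
    ‖deriv F a‖ * (1 - ‖a‖ ^ 2) ≤ 1 - ‖F a‖ ^ 2 := by
  have haabs : ‖a‖ < 1 := mem_ball_zero_iff.mp ha
  set b : ℂ := F a with hb_def
  have hbabs : ‖b‖ < 1 := mem_ball_zero_iff.mp (hmaps ha)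
  set σa : ℂ → ℂ := fun x => (a - x) / (1 - (starRingEnd ℂ) a * x) with hσa_def
  set σb : ℂ → ℂ := fun x => (b - x) / (1 - (starRingEnd ℂ) b * x) with hσb_def
  set Φ : ℂ → ℂ := fun x => σb (F (σa x)) with hΦ_def
  have hσa_mem : ∀ x ∈ ball (0:ℂ) 1, σa x ∈ ball (0:ℂ) 1 := by
    intro x hx
    rw [mem_ball_zero_iff]
    exact mobius_maps haabs (mem_ball_zero_iff.mp hx)
  have hσb_mem : ∀ x ∈ ball (0:ℂ) 1, σb x ∈ ball (0:ℂ) 1 := by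
    intro x hx
    rw [mem_ball_zero_iff]
    exact mobius_maps hbabs (mem_ball_zero_iff.mp hx)
  have hσa_diff : DifferentiableOn ℂ σa (ball (0:ℂ) 1) := by
    intro x hx
    exact (mobius_hasDerivAt (mobius_denom_ne haabs (mem_ball_zero_iff.mp hx))
      ).differentiableAt.differentiableWithinAt
  have hσb_diff : DifferentiableOn ℂ σb (ball (0:ℂ) 1) := by
    intro x hx
    exact (mobius_hasDerivAt (mobius_denom_ne hbabs (mem_ball_zero_iff.mp hx))
      ).differentiableAt.differentiableWithinAt
  have hΦ_diff : DifferentiableOn ℂ Φ (ball (0:ℂ) 1) :=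
    (hσb_diff.comp (hF.comp hσa_diff hσa_mem) (fun x hx => hmaps (hσa_mem x hx)))
  have hΦ_maps : MapsTo Φ (ball (0:ℂ) 1) (ball (0:ℂ) 1) := fun x hx =>
    hσb_mem _ (hmaps (hσa_mem x hx))
  have hσa0 : σa 0 = a := by simp [hσa_def]
  have hσbb : σb b = 0 := by simp [hσb_def]
  have hΦ0 : Φ 0 = 0 := by rw [hΦ_def]; simp only [hσa0, ← hb_def, hσbb]
  -- derivative of Φ at 0
  have h1 : HasDerivAt σa ((Complex.normSq a : ℂ) - 1) 0 := by
    have hden0 : (1:ℂ) - (starRingEnd ℂ) a * (0:ℂ) ≠ 0 := by simp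
    have h := mobius_hasDerivAt (c := a) hden0
    rw [hσa_def]
    convert h using 1
    simp
  have h2 : HasDerivAt F (deriv F a) a :=
    (hF.differentiableAt (isOpen_ball.mem_nhds ha)).hasDerivAt
  have h3 : HasDerivAt σb ((Complex.normSq b - 1) / (1 - (starRingEnd ℂ) b * b) ^ 2) b :=
    mobius_hasDerivAt (mobius_denom_ne hbabs hbabs)
  have hden_b : (1 : ℂ) - (starRingEnd ℂ) b * b = ↑(1 - Complex.normSq b) := by
    push_cast
    rw [mul_comm]
    linear_combination -Complex.mul_conj b
  have hΦ' : HasDerivAt Φ ((Complex.normSq b - 1) / (1 - (starRingEnd ℂ) b * b) ^ 2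
      * (deriv F a * ((Complex.normSq a : ℂ) - 1))) 0 := by
    have h2' : HasDerivAt F (deriv F a) (σa 0) := by rw [hσa0]; exact h2
    have hc1 : HasDerivAt (fun x => F (σa x)) (deriv F a * ((Complex.normSq a : ℂ) - 1)) 0 :=
      h2'.comp 0 h1
    have hFσa0 : F (σa 0) = b := by rw [hσa0]
    have h3' : HasDerivAt σb ((Complex.normSq b - 1) / (1 - (starRingEnd ℂ) b * b) ^ 2)
        (F (σa 0)) := by rw [hFσa0]; exact h3
    have hres := h3'.comp 0 hc1
    rw [hΦ_def]
    exact hres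
  have hschwarz := Complex.norm_deriv_le_div_of_mapsTo_ball hΦ_diff
    (by rw [hΦ0]; exact hΦ_maps.mono_right ball_subset_closedBall) zero_lt_one
  rw [hΦ'.deriv] at hschwarz
  -- compute the absolute value
  have hsb : 0 < 1 - Complex.normSq b := by
    rw [← Complex.sq_norm]; nlinarith [norm_nonneg b]
  have hsa : 0 < 1 - Complex.normSq a := by
    rw [← Complex.sq_norm]; nlinarith [norm_nonneg a]
  have habs_eq : ‖(Complex.normSq b - 1) / (1 - (starRingEnd ℂ) b * b) ^ 2
      * (deriv F a * ((Complex.normSq a : ℂ) - 1))‖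
      = (1 - Complex.normSq b)⁻¹ * (‖deriv F a‖ * (1 - Complex.normSq a)) := by
    rw [norm_mul, norm_div, norm_mul, norm_pow, hden_b]
    have e1 : ‖(Complex.normSq b : ℂ) - 1‖ = 1 - Complex.normSq b := by
      have : ((Complex.normSq b : ℂ) - 1) = ((Complex.normSq b - 1 : ℝ) : ℂ) := by push_cast; ring
      rw [this, Complex.norm_real, Real.norm_eq_abs, abs_of_neg (by linarith)]
      ring
    have e2 : ‖((1 - Complex.normSq b : ℝ) : ℂ)‖ = 1 - Complex.normSq b := by
      rw [Complex.norm_real, Real.norm_eq_abs, abs_of_pos hsb]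
    have e3 : ‖(Complex.normSq a : ℂ) - 1‖ = 1 - Complex.normSq a := by
      have : ((Complex.normSq a : ℂ) - 1) = ((Complex.normSq a - 1 : ℝ) : ℂ) := by push_cast; ring
      rw [this, Complex.norm_real, Real.norm_eq_abs, abs_of_neg (by linarith)]
      ring
    rw [e1, e2, e3]
    field_simp
  rw [habs_eq] at hschwarz
  have hfinal : ‖deriv F a‖ * (1 - Complex.normSq a) ≤ 1 - Complex.normSq b := by
    rw [inv_mul_le_iff₀ hsb] at hschwarz  -- may need name fix
    linarith [hschwarz]
  rw [← Complex.sq_norm a, ← Complex.sq_norm b] at hfinal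
  exact hfinal


set_option maxHeartbeats 1000000 in
/-- Chuaqui–Duren–Osgood: a convex univalent function on the disk has Schwarzian
norm at most 2. -/
theorem stmt14 (f : ℂ → ℂ)
    (hd : DifferentiableOn ℂ f (ball (0 : ℂ) 1))
    (hinj : Set.InjOn f (ball (0 : ℂ) 1))
    (hconv : Convex ℝ (f '' ball (0 : ℂ) 1)) :
    ∀ z ∈ ball (0 : ℂ) 1,
      (1 - ‖z‖ ^ 2) ^ 2 * ‖schwarzian f z‖ ≤ 2 := by
  intro z hz
  have hAn : AnalyticOnNhd ℂ f (ball (0:ℂ) 1) := hd.analyticOnNhd isOpen_ball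
  have hfne : ∀ w ∈ ball (0:ℂ) 1, deriv f w ≠ 0 := fun w hw =>
    deriv_ne_zero_of_injOn isOpen_ball hd hinj hw
  set p : ℂ → ℂ := fun w => deriv (deriv f) w / deriv f w with hp_def
  have hp_at : ∀ w ∈ ball (0:ℂ) 1, DifferentiableAt ℂ p w := by
    intro w hw
    exact ((hAn.deriv.deriv w hw).differentiableAt).div
      ((hAn.deriv w hw).differentiableAt) (hfne w hw)
  have hRe : ∀ w ∈ ball (0:ℂ) 1, 0 ≤ (1 + w * p w).re := fun w hw =>
    convexity_criterion hd hinj hconv hw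
  set e : ℂ → ℂ := fun w => 2 + w * p w with he_def
  have he_at : ∀ w ∈ ball (0:ℂ) 1, DifferentiableAt ℂ e w := by
    intro w hw
    exact ((differentiableAt_id.mul (hp_at w hw)).const_add 2)
  have heRe : ∀ w ∈ ball (0:ℂ) 1, 1 ≤ (e w).re := by
    intro w hw
    have h0 := hRe w hw
    have h1 : (e w).re = 2 + (w * p w).re := by
      simp only [he_def, Complex.add_re]
      norm_num
    have h2 : (1 + w * p w).re = 1 + (w * p w).re := by
      simp [Complex.add_re]
    rw [h2] at h0
    linarith
  have hene : ∀ w ∈ ball (0:ℂ) 1, e w ≠ 0 := by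
    intro w hw h0
    have := heRe w hw
    rw [h0] at this
    simp at this
    linarith
  set ψ : ℂ → ℂ := fun w => p w / e w with hψ_def
  set ω : ℂ → ℂ := fun w => w * ψ w with hω_def
  have hψ_at : ∀ w ∈ ball (0:ℂ) 1, DifferentiableAt ℂ ψ w := fun w hw =>
    (hp_at w hw).div (he_at w hw) (hene w hw)
  have hψd : DifferentiableOn ℂ ψ (ball (0:ℂ) 1) := fun w hw =>
    (hψ_at w hw).differentiableWithinAt
  have hωd : DifferentiableOn ℂ ω (ball (0:ℂ) 1) := fun w hw =>
    (differentiableAt_id.mul (hψ_at w hw)).differentiableWithinAt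
  have hω0 : ω 0 = 0 := by simp [hω_def]
  -- |ω| ≤ 1 on the ball
  have hω_le : ∀ w ∈ ball (0:ℂ) 1, ‖ω w‖ ≤ 1 := by
    intro w hw
    have hkey : Complex.normSq (w * p w) ≤ Complex.normSq (e w) := by
      have hre := hRe w hw
      have hdiff : Complex.normSq (e w) - Complex.normSq (w * p w) = 4 * (1 + w * p w).re := by
        simp only [he_def, Complex.normSq_apply, Complex.add_re, Complex.add_im,
          Complex.one_re, Complex.one_im]
        norm_num
        ring
      nlinarith
    have habs2 : ‖w * p w‖ ≤ ‖e w‖ := by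
      have := Real.sqrt_le_sqrt hkey
      rwa [← Complex.norm_def, ← Complex.norm_def] at this
    have hrw : ω w = (w * p w) / e w := by
      simp only [hω_def, hψ_def]
      ring
    rw [hrw, norm_div, div_le_one (norm_pos_iff.mpr (hene w hw))]
    exact habs2
  -- ω maps into the open ball, via the maximum principle
  have hωmaps : MapsTo ω (ball (0:ℂ) 1) (ball (0:ℂ) 1) := by
    intro w hw
    rw [mem_ball_zero_iff]
    rcases lt_or_eq_of_le (hω_le w hw) with h | h
    · exact h
    · exfalso
      have hmax : IsMaxOn (norm ∘ ω) (ball (0:ℂ) 1) w := by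
        intro x hx
        simp only [Function.comp]
        rw [h]
        exact hω_le x hx
      have hEq := Complex.eqOn_of_isPreconnected_of_isMaxOn_norm
        (convex_ball (0:ℂ) 1).isPreconnected isOpen_ball hωd hw hmax
      have h0 : ω 0 = ω w := hEq (mem_ball_self one_pos)
      rw [hω0] at h0
      rw [← h0] at h
      simp at h
  -- |ψ| ≤ 1 via the Schwarz lemma (dslope version)
  have hψ_le : ∀ w ∈ ball (0:ℂ) 1, ‖ψ w‖ ≤ 1 := by
    intro w hw
    have hds := Complex.norm_dslope_le_div_of_mapsTo_ball hωd (by rw [hω0]; exact hωmaps.mono_right ball_subset_closedBall) hw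
    have heq : dslope ω 0 w = ψ w := by
      rcases eq_or_ne w 0 with rfl | hw0
      · rw [dslope_same]
        have hψ0 : HasDerivAt ω (ψ 0) 0 := by
          have h1 : HasDerivAt (fun x : ℂ => x) 1 0 := hasDerivAt_id 0
          have h2 : HasDerivAt ψ (deriv ψ 0) 0 := (hψ_at 0 (mem_ball_self one_pos)).hasDerivAt
          have h3 := h1.mul h2
          have : (1 : ℂ) * ψ 0 + 0 * deriv ψ 0 = ψ 0 := by ring
          rw [this] at h3
          exact h3
        exact hψ0.deriv
      · rw [dslope_of_ne _ hw0, slope_def_field, hω0, sub_zero, sub_zero]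
        simp only [hω_def]
        rw [mul_comm, mul_div_assoc, div_self hw0, mul_one]
    rw [heq] at hds
    simpa using hds
  -- Schwarz–Pick for ψ (allowing the constant case)
  have hSP : ∀ w ∈ ball (0:ℂ) 1,
      ‖deriv ψ w‖ * (1 - ‖w‖ ^ 2) ≤ 1 - ‖ψ w‖ ^ 2 := by
    by_cases hex : ∃ w₁ ∈ ball (0:ℂ) 1, ‖ψ w₁‖ = 1
    · obtain ⟨w₁, hw₁, habs1⟩ := hex
      have hmax : IsMaxOn (norm ∘ ψ) (ball (0:ℂ) 1) w₁ := by
        intro x hx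
        simp only [Function.comp]
        rw [habs1]
        exact hψ_le x hx
      have hEq := Complex.eqOn_of_isPreconnected_of_isMaxOn_norm
        (convex_ball (0:ℂ) 1).isPreconnected isOpen_ball hψd hw₁ hmax
      intro w hw
      have hder0 : deriv ψ w = 0 := by
        have hev : ψ =ᶠ[𝓝 w] fun _ => ψ w₁ := by
          filter_upwards [isOpen_ball.mem_nhds hw] with x hx
          exact hEq hx
        rw [hev.deriv_eq]
        exact deriv_const _ _
      rw [hder0]
      simp only [norm_zero, zero_mul]
      nlinarith [hψ_le w hw, norm_nonneg (ψ w)]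
    · push_neg at hex
      intro w hw
      have hmaps' : MapsTo ψ (ball (0:ℂ) 1) (ball (0:ℂ) 1) := fun x hx =>
        mem_ball_zero_iff.mpr (lt_of_le_of_ne (hψ_le x hx) (hex x hx))
      exact schwarz_pick hψd hmaps' hw
  -- identity relating the Schwarzian to deriv ψ
  have hp' : HasDerivAt p (deriv p z) z := (hp_at z hz).hasDerivAt
  have he' : HasDerivAt e (p z + z * deriv p z) z := by
    have h1 := ((hasDerivAt_id z).mul hp').const_add 2
    simp only [id_eq] at h1
    have h9 : p z + z * deriv p z = 1 * p z + z * deriv p z := by ring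
    rw [h9]
    exact h1
  have hψ' : HasDerivAt ψ
      ((deriv p z * e z - p z * (p z + z * deriv p z)) / (e z) ^ 2) z :=
    hp'.div he' (hene z hz)
  have hS_eq : schwarzian f z = deriv ψ z * (e z) ^ 2 / 2 := by
    have h1 : schwarzian f z = deriv p z - (p z) ^ 2 / 2 := by
      have hpz : p z = deriv (deriv f) z / deriv f z := rfl
      unfold schwarzian
      rw [← hpz, ← hp_def]
    rw [h1, hψ'.deriv, div_mul_eq_mul_div, mul_div_cancel_right₀ _ (pow_ne_zero 2 (hene z hz))]
    simp only [he_def]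
    ring
  -- final computation
  have hx : ‖z‖ < 1 := mem_ball_zero_iff.mp hz
  have hprod : ‖1 - z * ψ z‖ * ‖e z‖ = 2 := by
    have hz_ne := hene z hz
    have h7 : (1 - z * ψ z) * e z = e z - z * p z := by
      simp only [hψ_def]
      field_simp
    have h8 : e z - z * p z = 2 := by simp only [he_def]; ring
    have hmul : (1 - z * ψ z) * e z = 2 := by rw [h7, h8]
    rw [← norm_mul, hmul]
    simp
  have hkey2 : (1 - ‖z‖ ^ 2) * (1 - ‖ψ z‖ ^ 2)
      ≤ ‖1 - z * ψ z‖ ^ 2 := by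
    have hre : (z * ψ z).re ≤ ‖z‖ * ‖ψ z‖ := by
      calc (z * ψ z).re ≤ ‖z * ψ z‖ := Complex.re_le_norm _
        _ = ‖z‖ * ‖ψ z‖ := norm_mul _ _
    have hns : ‖1 - z * ψ z‖ ^ 2
        = 1 - 2 * (z * ψ z).re + (‖z‖ * ‖ψ z‖) ^ 2 := by
      rw [Complex.sq_norm]
      have h5 : Complex.normSq (1 - z * ψ z)
          = 1 - 2 * (z * ψ z).re + Complex.normSq (z * ψ z) := by
        simp only [Complex.normSq_apply, Complex.sub_re, Complex.sub_im,
          Complex.one_re, Complex.one_im]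
        ring
      rw [h5, ← Complex.sq_norm (z * ψ z), norm_mul]
      try ring
    rw [hns]
    nlinarith [hre, sq_nonneg (‖z‖ - ‖ψ z‖)]
  have hSPz := hSP z hz
  have hψz := hψ_le z hz
  have hD : 0 ≤ ‖deriv ψ z‖ := norm_nonneg _
  have hE : 0 ≤ ‖e z‖ := norm_nonneg _
  have hM : 0 ≤ ‖1 - z * ψ z‖ := norm_nonneg _
  have hxpos : 0 < 1 - ‖z‖ ^ 2 := by nlinarith [norm_nonneg z]
  have hypos : 0 ≤ 1 - ‖ψ z‖ ^ 2 := by nlinarith [norm_nonneg (ψ z)]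
  rw [hS_eq]
  have habs3 : ‖deriv ψ z * (e z) ^ 2 / 2‖
      = ‖deriv ψ z‖ * ‖e z‖ ^ 2 / 2 := by
    rw [norm_div, norm_mul, norm_pow]
    simp
  rw [habs3]
  have hs1 : (1 - ‖z‖ ^ 2) ^ 2 * (‖deriv ψ z‖ * ‖e z‖ ^ 2)
      ≤ (1 - ‖z‖ ^ 2) * (1 - ‖ψ z‖ ^ 2) * ‖e z‖ ^ 2 := by
    nlinarith [mul_le_mul_of_nonneg_right hSPz (mul_nonneg hxpos.le (sq_nonneg (‖e z‖)))]
  have hs2 : (1 - ‖z‖ ^ 2) * (1 - ‖ψ z‖ ^ 2) * ‖e z‖ ^ 2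
      ≤ ‖1 - z * ψ z‖ ^ 2 * ‖e z‖ ^ 2 := by
    nlinarith [mul_le_mul_of_nonneg_right hkey2 (sq_nonneg (‖e z‖))]
  have hs3 : ‖1 - z * ψ z‖ ^ 2 * ‖e z‖ ^ 2 = 4 := by
    have h10 : ‖1 - z * ψ z‖ ^ 2 * ‖e z‖ ^ 2
        = (‖1 - z * ψ z‖ * ‖e z‖) ^ 2 := by ring
    rw [h10, hprod]
    norm_num
  have h11 : (1 - ‖z‖ ^ 2) ^ 2 * (‖deriv ψ z‖ * ‖e z‖ ^ 2 / 2)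
      = (1 - ‖z‖ ^ 2) ^ 2 * (‖deriv ψ z‖ * ‖e z‖ ^ 2) / 2 := by
    ring
  rw [h11]
  linarith [hs1, hs2]
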